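/- Let G = (V,E) be a nontrivial graph with V = {v_1,…,v_n}, and let G' be the graph constructed from G as follows: the vertex set of G' is V_1 ∪ V_2 ∪ U_1 ∪ U_2, where V_k = {v_i^k : i ∈ [n]} and U_k = {u_i^k : i ∈ [n]} for k ∈ [2]; the edge set of G' consists of all edges between distinct vertices of V_1 ∪ U_1, together with the edges v_i^2 v_j^1 and u_i^2 u_j^1 for each i ∈ [n] and each v_j ∈ N_G[v_i]. Then, for every positive integer k, the graph G has a dominating set of cardinality at most k if and only if G' has a semipaired dominating set of cardinality at most 2k. -/

import Mathlib

/-- `D` is a dominating set of `G`. -/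
def IsDomSet {V : Type*} (G : SimpleGraph V) (D : Finset V) : Prop :=
  ∀ v, v ∉ D → ∃ u ∈ D, G.Adj u v

/-- `D` is a semipaired dominating set of `G`: a dominating set that can be partitioned
into 2-element subsets (given by a fixed-point-free involution on `D`) such that the two
vertices in each pair are at distance at most 2 (adjacent or having a common neighbor). -/
def IsSemiPD {V : Type*} (G : SimpleGraph V) (D : Finset V) : Prop :=
  IsDomSet G D ∧ ∃ f : V → V, ∀ v ∈ D, f v ∈ D ∧ f v ≠ v ∧ f (f v) = v ∧
    (G.Adj v (f v) ∨ ∃ w, G.Adj v w ∧ G.Adj (f v) w)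

/-- Vertices of the graph `G'` constructed from a graph `G` with `n` vertices. -/
inductive SV (n : ℕ) where
  | v1 : Fin n → SV n
  | u1 : Fin n → SV n
  | v2 : Fin n → SV n
  | u2 : Fin n → SV n
deriving DecidableEq

/-- The defining relation of `G'`: all pairs of (distinct) vertices in `V₁ ∪ U₁` are
adjacent, and `v_i^2 v_j^1` and `u_i^2 u_j^1` are edges whenever `v_j ∈ N_G[v_i]`,
i.e. `j = i` or `v_i v_j ∈ E(G)`. -/
def sRel {n : ℕ} (G : SimpleGraph (Fin n)) : SV n → SV n → Prop
  | .v1 _, .v1 _ => True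
  | .v1 _, .u1 _ => True
  | .u1 _, .v1 _ => True
  | .u1 _, .u1 _ => True
  | .v2 i, .v1 j => i = j ∨ G.Adj i j
  | .u2 i, .u1 j => i = j ∨ G.Adj i j
  | _, _ => False

/-- The graph `G'` constructed from `G`. -/
def bigG' {n : ℕ} (G : SimpleGraph (Fin n)) : SimpleGraph (SV n) :=
  SimpleGraph.fromRel (sRel G)

def isVside {n : ℕ} : SV n → Bool
  | .v1 _ => true
  | .v2 _ => true
  | _ => false

def isUside {n : ℕ} : SV n → Bool
  | .u1 _ => true
  | .u2 _ => true
  | _ => false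

/-- Let `G'` be the split graph constructed from a nontrivial graph `G` with `n`
vertices. For every positive integer `k`, `G` has a dominating set of cardinality
at most `k` iff `G'` has a semipaired dominating set of cardinality at most `2k`. -/
theorem domSet_iff_semiPD_bigG' {n : ℕ} (hn : 2 ≤ n) (G : SimpleGraph (Fin n))
    (k : ℕ) (hk : 0 < k) :
    (∃ D : Finset (Fin n), IsDomSet G D ∧ D.card ≤ k) ↔
    (∃ D : Finset (SV n), IsSemiPD (bigG' G) D ∧ D.card ≤ 2 * k) := by
  constructor
  · rintro ⟨D, hD, hcard⟩
    have hDne : D.Nonempty := by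
      rcases Finset.eq_empty_or_nonempty D with h | h
      · exfalso
        obtain ⟨u, hu, -⟩ := hD ⟨0, by omega⟩ (by simp [h])
        simp [h] at hu
      · exact h
    obtain ⟨i0, hi0⟩ := hDne
    refine ⟨D.image SV.v1 ∪ D.image SV.u1, ⟨?_, ?_⟩, ?_⟩
    · intro v hv
      cases v with
      | v1 j =>
        refine ⟨SV.u1 i0, ?_, ?_⟩
        · simp only [Finset.mem_union, Finset.mem_image]
          exact Or.inr ⟨i0, hi0, rfl⟩
        · exact ⟨by simp, Or.inl trivial⟩
      | u1 j =>
        refine ⟨SV.v1 i0, ?_, ?_⟩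
        · simp only [Finset.mem_union, Finset.mem_image]
          exact Or.inl ⟨i0, hi0, rfl⟩
        · exact ⟨by simp, Or.inl trivial⟩
      | v2 i =>
        by_cases hi : i ∈ D
        · refine ⟨SV.v1 i, ?_, ?_⟩
          · simp only [Finset.mem_union, Finset.mem_image]
            exact Or.inl ⟨i, hi, rfl⟩
          · exact ⟨by simp, Or.inr (Or.inl rfl)⟩
        · obtain ⟨j, hj, hadj⟩ := hD i hi
          refine ⟨SV.v1 j, ?_, ?_⟩
          · simp only [Finset.mem_union, Finset.mem_image]
            exact Or.inl ⟨j, hj, rfl⟩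
          · exact ⟨by simp, Or.inr (Or.inr hadj.symm)⟩
      | u2 i =>
        by_cases hi : i ∈ D
        · refine ⟨SV.u1 i, ?_, ?_⟩
          · simp only [Finset.mem_union, Finset.mem_image]
            exact Or.inr ⟨i, hi, rfl⟩
          · exact ⟨by simp, Or.inr (Or.inl rfl)⟩
        · obtain ⟨j, hj, hadj⟩ := hD i hi
          refine ⟨SV.u1 j, ?_, ?_⟩
          · simp only [Finset.mem_union, Finset.mem_image]
            exact Or.inr ⟨j, hj, rfl⟩
          · exact ⟨by simp, Or.inr (Or.inr hadj.symm)⟩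
    · refine ⟨fun x => match x with | .v1 i => .u1 i | .u1 i => .v1 i | x => x, ?_⟩
      intro v hv
      simp only [Finset.mem_union, Finset.mem_image] at hv
      rcases hv with ⟨i, hi, rfl⟩ | ⟨i, hi, rfl⟩
      · refine ⟨?_, by simp, rfl, Or.inl ⟨by simp, Or.inl trivial⟩⟩
        simp only [Finset.mem_union, Finset.mem_image]
        exact Or.inr ⟨i, hi, rfl⟩
      · refine ⟨?_, by simp, rfl, Or.inl ⟨by simp, Or.inl trivial⟩⟩
        simp only [Finset.mem_union, Finset.mem_image]
        exact Or.inl ⟨i, hi, rfl⟩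
    · calc (D.image SV.v1 ∪ D.image SV.u1).card
          ≤ (D.image SV.v1).card + (D.image SV.u1).card := Finset.card_union_le _ _
        _ ≤ D.card + D.card := Nat.add_le_add (Finset.card_image_le) (Finset.card_image_le)
        _ ≤ 2 * k := by omega
  · rintro ⟨S, ⟨hdom, -⟩, hcard⟩
    classical
    set Dv : Finset (Fin n) := Finset.univ.filter (fun j => SV.v1 j ∈ S ∨ SV.v2 j ∈ S) with hDv
    set Du : Finset (Fin n) := Finset.univ.filter (fun j => SV.u1 j ∈ S ∨ SV.u2 j ∈ S) with hDu
    have hdv : IsDomSet G Dv := by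
      intro i hi
      simp only [hDv, Finset.mem_filter, Finset.mem_univ, true_and, not_or] at hi
      obtain ⟨u, hu, hadj⟩ := hdom (SV.v2 i) hi.2
      rw [bigG', SimpleGraph.fromRel_adj] at hadj
      obtain ⟨hne, h⟩ := hadj
      cases u with
      | v1 j =>
        simp only [sRel] at h
        rcases h with h | h
        · exact absurd h not_false
        · rcases h with rfl | h
          · exact absurd hu hi.1
          · exact ⟨j, by simp [hDv, hu], h.symm⟩
      | u1 j => simp [sRel] at h
      | v2 j => simp [sRel] at h
      | u2 j => simp [sRel] at h
    have hdu : IsDomSet G Du := by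
      intro i hi
      simp only [hDu, Finset.mem_filter, Finset.mem_univ, true_and, not_or] at hi
      obtain ⟨u, hu, hadj⟩ := hdom (SV.u2 i) hi.2
      rw [bigG', SimpleGraph.fromRel_adj] at hadj
      obtain ⟨hne, h⟩ := hadj
      cases u with
      | u1 j =>
        simp only [sRel] at h
        rcases h with h | h
        · exact absurd h not_false
        · rcases h with rfl | h
          · exact absurd hu hi.1
          · exact ⟨j, by simp [hDu, hu], h.symm⟩
      | v1 j => simp [sRel] at h
      | v2 j => simp [sRel] at h
      | u2 j => simp [sRel] at h
    have hsum : Dv.card + Du.card ≤ S.card := by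
      have h1 : Dv.card ≤ (S.filter (fun x => isVside x)).card := by
        apply Finset.card_le_card_of_injOn (fun j => if SV.v1 j ∈ S then SV.v1 j else SV.v2 j)
        · intro j hj
          simp only [hDv, Finset.mem_coe, Finset.mem_filter, Finset.mem_univ, true_and] at hj
          by_cases h : SV.v1 j ∈ S
          · simp only [if_pos h, Finset.mem_coe, Finset.mem_filter]; exact ⟨h, rfl⟩
          · simp only [if_neg h]
            rcases hj with hj | hj
            · exact absurd hj h
            · simp only [Finset.mem_coe, Finset.mem_filter]; exact ⟨hj, rfl⟩
        · intro a ha b hb hab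
          by_cases h1 : SV.v1 a ∈ S <;> by_cases h2 : SV.v1 b ∈ S <;>
            simp [h1, h2] at hab <;> exact hab
      have h2 : Du.card ≤ (S.filter (fun x => isUside x)).card := by
        apply Finset.card_le_card_of_injOn (fun j => if SV.u1 j ∈ S then SV.u1 j else SV.u2 j)
        · intro j hj
          simp only [hDu, Finset.mem_coe, Finset.mem_filter, Finset.mem_univ, true_and] at hj
          by_cases h : SV.u1 j ∈ S
          · simp only [if_pos h, Finset.mem_coe, Finset.mem_filter]; exact ⟨h, rfl⟩
          · simp only [if_neg h]
            rcases hj with hj | hj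
            · exact absurd hj h
            · simp only [Finset.mem_coe, Finset.mem_filter]; exact ⟨hj, rfl⟩
        · intro a ha b hb hab
          by_cases h1 : SV.u1 a ∈ S <;> by_cases h2 : SV.u1 b ∈ S <;>
            simp [h1, h2] at hab <;> exact hab
      have hdisj : Disjoint (S.filter (fun x => isVside x)) (S.filter (fun x => isUside x)) := by
        rw [Finset.disjoint_left]
        intro x hx hx'
        simp only [Finset.mem_filter] at hx hx'
        cases x <;> simp [isVside, isUside] at hx hx' <;> trivial
      have h3 : (S.filter (fun x => isVside x)).card + (S.filter (fun x => isUside x)).card ≤ S.card := by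
        rw [← Finset.card_union_of_disjoint hdisj]
        exact Finset.card_le_card (Finset.union_subset (Finset.filter_subset _ _) (Finset.filter_subset _ _))
      omega
    rcases le_or_gt Dv.card k with h | h
    · exact ⟨Dv, hdv, h⟩
    · exact ⟨Du, hdu, by omega⟩
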